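/- Let G be a connected k-uniform hypergraph on n vertices with degree sequence d₁ ≥ … ≥ d_n and d* as in the previous statement (d* = 1 when d₁ = d₂). Then μ(G) = d₁ + d₁(1/d*)^{k−1} if and only if G is regular or G is the blow-up H¹ of a regular (k−1)-uniform hypergraph H on n−1 vertices (the blow-up H¹ is obtained by adding one new common vertex to every edge of H). -/

import Mathlib

/-- The spectral radius of an order-`k` tensor of dimension `n`: the largest modulus of its
(complex) eigenvalues, where `ρ` is an eigenvalue if `T x = ρ x^{[k-1]}` for some `x ≠ 0`. -/
noncomputable def specRad (n k : ℕ) (T : Fin n → (Fin (k-1) → Fin n) → ℝ) : ℝ :=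
  sSup {r : ℝ | ∃ ρ : ℂ, ‖ρ‖ = r ∧ ∃ x : Fin n → ℂ, x ≠ 0 ∧
    ∀ i, (∑ f : Fin (k-1) → Fin n, (T i f : ℂ) * ∏ a, x (f a)) = ρ * x i ^ (k-1)}

/-- A hypergraph on vertex set `Fin n` is a finite set of edges; `hDeg` is the degree of
vertex `i`, the number of edges containing `i`. -/
def hDeg (n : ℕ) (E : Finset (Finset (Fin n))) (i : Fin n) : ℕ :=
  (E.filter (fun e => i ∈ e)).card

/-- The average 2-degree of vertex `i` in a `k`-uniform hypergraph:
`m_i = (Σ_{{i,i₂,…,i_k} ∈ E_i} d_{i₂} ⋯ d_{i_k}) / d_i^{k-1}`. -/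
noncomputable def avg2 (n k : ℕ) (E : Finset (Finset (Fin n))) (i : Fin n) : ℝ :=
  (∑ e ∈ E.filter (fun e => i ∈ e), ∏ j ∈ e.erase i, (hDeg n E j : ℝ)) /
    (hDeg n E i : ℝ) ^ (k-1)

/-- The adjacency tensor of a `k`-uniform hypergraph: entry `1/(k-1)!` at `(i₁,…,i_k)` when
`{i₁,…,i_k}` is an edge, and `0` otherwise. -/
noncomputable def adjT (n k : ℕ) (E : Finset (Finset (Fin n))) :
    Fin n → (Fin (k-1) → Fin n) → ℝ :=
  fun i f => if insert i (Finset.image f Finset.univ) ∈ E then 1 / (k-1).factorial else 0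

/-- The signless Laplacian tensor `Q(G) = D(G) + A(G)`. -/
noncomputable def qT (n k : ℕ) (E : Finset (Finset (Fin n))) :
    Fin n → (Fin (k-1) → Fin n) → ℝ :=
  fun i f => (if ∀ a, f a = i then (hDeg n E i : ℝ) else 0) + adjT n k E i f

/-- A hypergraph is connected if every pair of distinct vertices is joined by a sequence of
pairwise intersecting edges. -/
def HConn (n : ℕ) (E : Finset (Finset (Fin n))) : Prop :=
  ∀ u v : Fin n, u ≠ v → ∃ r : ℕ, ∃ es : Fin (r+1) → Finset (Fin n),
    (∀ s, es s ∈ E) ∧ u ∈ es 0 ∧ v ∈ es (Fin.last r) ∧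
    ∀ s : Fin r, (es s.castSucc ∩ es s.succ).Nonempty


section AuxStmt14
open Finset
variable {n k : ℕ}

lemma insert_image_eq_iff {E : Finset (Finset (Fin n))}
    (hcard : ∀ e ∈ E, e.card = k) {i : Fin n} {e : Finset (Fin n)} (he : e ∈ E) (hie : i ∈ e)
    (f : Fin (k-1) → Fin n) :
    insert i (Finset.image f Finset.univ) = e ↔ Finset.image f Finset.univ = e.erase i := by
  constructor
  · intro h
    have hsub : e.erase i ⊆ Finset.image f Finset.univ := by
      intro j hj
      have hj' : j ∈ insert i (Finset.image f Finset.univ) := h ▸ (erase_subset _ _ hj)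
      rcases mem_insert.mp hj' with h1 | h1
      · exact absurd h1 (ne_of_mem_erase hj)
      · exact h1
    have hc1 : (Finset.image f Finset.univ).card ≤ k - 1 :=
      le_trans card_image_le (by simp)
    have hc2 : (e.erase i).card = k - 1 := by rw [card_erase_of_mem hie, hcard e he]
    exact (eq_of_subset_of_card_le hsub (by omega)).symm
  · intro h; rw [h, insert_erase hie]


lemma sum_image_eq_fiber {m : ℕ} {t : Finset (Fin n)} (ht : t.card = m) (y : Fin n → ℝ) :
    ∑ f ∈ (univ : Finset (Fin m → Fin n)).filter (fun f => Finset.image f Finset.univ = t),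
      ∏ a, y (f a) = (m.factorial : ℝ) * ∏ j ∈ t, y j := by
  classical
  set et : {x // x ∈ t} ≃ Fin m := Finset.equivFinOfCardEq ht with het
  set Ψ : Equiv.Perm (Fin m) → (Fin m → Fin n) := fun σ a => (et.symm (σ a)).val with hΨ
  have hΨinj : Function.Injective Ψ := by
    intro σ τ h
    ext a
    have h2 := congrFun h a
    have := et.symm.injective (Subtype.val_injective h2)
    exact Fin.val_congr this
  have hset : (univ : Finset (Fin m → Fin n)).filter (fun f => Finset.image f Finset.univ = t)
      = Finset.image Ψ univ := by
    ext f
    simp only [mem_filter, mem_univ, true_and, Finset.mem_image]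
    constructor
    · intro hf
      have hmem : ∀ a, f a ∈ t := by
        intro a
        rw [← hf]
        exact Finset.mem_image_of_mem f (mem_univ a)
      have hfinj : Function.Injective f := by
        have hcard : (Finset.image f Finset.univ).card = (univ : Finset (Fin m)).card := by
          rw [hf, ht]; simp
        have := Finset.injOn_of_card_image_eq hcard
        intro a b hab
        exact this (by simp) (by simp) hab
      set g : Fin m → Fin m := fun a => et ⟨f a, hmem a⟩ with hg
      have hginj : Function.Injective g := by
        intro a b hab
        apply hfinj
        have := et.injective hab
        exact congrArg Subtype.val this
      have hgbij : Function.Bijective g := Finite.injective_iff_bijective.mp hginj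
      refine ⟨Equiv.ofBijective g hgbij, ?_⟩
      funext a
      simp [hΨ, Equiv.ofBijective_apply, hg]
    · rintro ⟨σ, -, rfl⟩
      ext j
      simp only [Finset.mem_image, mem_univ, true_and, hΨ]
      constructor
      · rintro ⟨a, rfl⟩; exact (et.symm (σ a)).2
      · intro hj
        exact ⟨σ.symm (et ⟨j, hj⟩), by simp⟩
  rw [hset, Finset.sum_image (fun a _ b _ h => hΨinj h)]
  have hterm : ∀ σ : Equiv.Perm (Fin m), ∏ a, y (Ψ σ a) = ∏ j ∈ t, y j := by
    intro σ
    rw [← Finset.prod_coe_sort t y]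
    exact Equiv.prod_comp (σ.trans et.symm) (fun b => y b.val)
  rw [Finset.sum_congr rfl (fun σ _ => hterm σ), Finset.sum_const, Finset.card_univ,
    Fintype.card_perm, Fintype.card_fin, nsmul_eq_mul]

lemma adj_row {E : Finset (Finset (Fin n))} (hcard : ∀ e ∈ E, e.card = k)
    (y : Fin n → ℝ) (i : Fin n) :
    ∑ f : Fin (k-1) → Fin n, adjT n k E i f * ∏ a, y (f a)
      = ∑ e ∈ E.filter (fun e => i ∈ e), ∏ j ∈ e.erase i, y j := by
  classical
  have key : ∀ f : Fin (k-1) → Fin n,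
      adjT n k E i f * ∏ a, y (f a)
        = ∑ e ∈ E.filter (fun e => i ∈ e),
            if insert i (Finset.image f Finset.univ) = e
              then (1 / (k-1).factorial : ℝ) * ∏ a, y (f a) else 0 := by
    intro f
    rw [Finset.sum_ite_eq (E.filter (fun e => i ∈ e)) (insert i (Finset.image f Finset.univ))]
    simp only [adjT, Finset.mem_filter, Finset.mem_insert_self, and_true, ite_mul, zero_mul]
  rw [Finset.sum_congr rfl (fun f _ => key f), Finset.sum_comm]
  refine Finset.sum_congr rfl ?_
  intro e he
  obtain ⟨heE, hie⟩ := Finset.mem_filter.mp he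
  have hrw : ∀ f : Fin (k-1) → Fin n,
      (if insert i (Finset.image f Finset.univ) = e
        then (1 / (k-1).factorial : ℝ) * ∏ a, y (f a) else 0)
      = (if Finset.image f Finset.univ = e.erase i
        then (1 / (k-1).factorial : ℝ) * ∏ a, y (f a) else 0) := by
    intro f
    exact if_congr (insert_image_eq_iff hcard heE hie f) rfl rfl
  rw [Finset.sum_congr rfl (fun f _ => hrw f), ← Finset.sum_filter, ← Finset.mul_sum,
    sum_image_eq_fiber (by rw [Finset.card_erase_of_mem hie, hcard e heE]) y]
  rw [← mul_assoc]
  have : (1 / ((k-1).factorial : ℝ)) * ((k-1).factorial : ℝ) = 1 := by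
    rw [one_div, inv_mul_cancel₀]
    exact_mod_cast (Nat.factorial_pos (k-1)).ne'
  rw [this, one_mul]

lemma q_row {E : Finset (Finset (Fin n))} (hcard : ∀ e ∈ E, e.card = k)
    (y : Fin n → ℝ) (i : Fin n) :
    ∑ f : Fin (k-1) → Fin n, qT n k E i f * ∏ a, y (f a)
      = (hDeg n E i : ℝ) * y i ^ (k-1)
        + ∑ e ∈ E.filter (fun e => i ∈ e), ∏ j ∈ e.erase i, y j := by
  classical
  simp only [qT, add_mul, Finset.sum_add_distrib]
  rw [adj_row hcard y i]
  congr 1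
  have key : ∀ f : Fin (k-1) → Fin n,
      (if ∀ a, f a = i then (hDeg n E i : ℝ) else 0) * ∏ a, y (f a)
        = if f = (fun _ => i) then (hDeg n E i : ℝ) * ∏ a, y (f a) else 0 := by
    intro f
    rw [ite_mul, zero_mul]
    congr 1
    simp [funext_iff]
  rw [Finset.sum_congr rfl (fun f _ => key f), Finset.sum_ite_eq' Finset.univ (fun _ => i)
    (fun f => (hDeg n E i : ℝ) * ∏ a, y (f a))]
  simp

lemma qT_nonneg (E : Finset (Finset (Fin n))) (i : Fin n) (f : Fin (k-1) → Fin n) :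
    0 ≤ qT n k E i f := by
  unfold qT adjT
  positivity

lemma abs_eig_le_row {E : Finset (Finset (Fin n))} (hcard : ∀ e ∈ E, e.card = k)
    {ρ : ℂ} {x : Fin n → ℂ}
    (heig : ∀ i, (∑ f : Fin (k-1) → Fin n, (qT n k E i f : ℂ) * ∏ a, x (f a))
      = ρ * x i ^ (k-1)) (i : Fin n) :
    ‖ρ‖ * ‖x i‖ ^ (k-1)
      ≤ (hDeg n E i : ℝ) * ‖x i‖ ^ (k-1)
        + ∑ e ∈ E.filter (fun e => i ∈ e), ∏ j ∈ e.erase i, ‖x j‖ := by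
  have h1 : ‖ρ‖ * ‖x i‖ ^ (k-1)
      = ‖ρ * x i ^ (k-1)‖ := by
    rw [norm_mul, norm_pow]
  rw [h1, ← heig i]
  calc ‖∑ f : Fin (k-1) → Fin n, (qT n k E i f : ℂ) * ∏ a, x (f a)‖
      ≤ ∑ f : Fin (k-1) → Fin n, ‖(qT n k E i f : ℂ) * ∏ a, x (f a)‖ :=
        norm_sum_le _ _
    _ = ∑ f : Fin (k-1) → Fin n, qT n k E i f * ∏ a, ‖x (f a)‖ := by
        refine Finset.sum_congr rfl fun f _ => ?_
        rw [norm_mul, norm_prod, Complex.norm_real, Real.norm_eq_abs, abs_of_nonneg (qT_nonneg E i f)]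
    _ = (hDeg n E i : ℝ) * ‖x i‖ ^ (k-1)
        + ∑ e ∈ E.filter (fun e => i ∈ e), ∏ j ∈ e.erase i, ‖x j‖ :=
        q_row hcard (fun j => ‖x j‖) i

lemma prod_factors_eq {ι : Type*} {s : Finset ι} {a b : ι → ℝ}
    (hle : ∀ j ∈ s, a j ≤ b j) (hb : ∀ j ∈ s, 0 < b j) (ha : ∀ j ∈ s, 0 ≤ a j)
    (h : ∏ j ∈ s, a j = ∏ j ∈ s, b j) : ∀ j ∈ s, a j = b j := by
  have hbpos : 0 < ∏ j ∈ s, b j := Finset.prod_pos hb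
  have hapos : ∀ j ∈ s, 0 < a j := by
    intro j hj
    rcases lt_or_eq_of_le (ha j hj) with h' | h'
    · exact h'
    · exfalso
      have : ∏ j ∈ s, a j = 0 := Finset.prod_eq_zero hj h'.symm
      rw [h] at this; exact hbpos.ne' this
  intro j hj
  by_contra hne
  have hlt : a j < b j := lt_of_le_of_ne (hle j hj) hne
  have := Finset.prod_lt_prod hapos hle ⟨j, hj, hlt⟩
  exact absurd h (ne_of_lt this)

lemma spec_bound (hn : 0 < n) {E : Finset (Finset (Fin n))} (hcard : ∀ e ∈ E, e.card = k)
    (y : Fin n → ℝ) (hy : ∀ j, 0 < y j) (R : ℝ)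
    (hR : ∀ i, (hDeg n E i : ℝ) * y i ^ (k-1)
        + ∑ e ∈ E.filter (fun e => i ∈ e), ∏ j ∈ e.erase i, y j ≤ R * y i ^ (k-1))
    {ρ : ℂ} {x : Fin n → ℂ} (hx : x ≠ 0)
    (heig : ∀ i, (∑ f : Fin (k-1) → Fin n, (qT n k E i f : ℂ) * ∏ a, x (f a))
      = ρ * x i ^ (k-1)) :
    ‖ρ‖ ≤ R := by
  classical
  haveI : Nonempty (Fin n) := ⟨⟨0, hn⟩⟩
  obtain ⟨i, -, hmax⟩ := Finset.exists_max_image Finset.univ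
    (fun j => ‖x j‖ / y j) Finset.univ_nonempty
  set M : ℝ := ‖x i‖ / y i with hM
  have hMpos : 0 < M := by
    obtain ⟨j, hj⟩ := Function.ne_iff.mp hx
    have h1 : 0 < ‖x j‖ / y j :=
      div_pos (norm_pos_iff.mpr hj) (hy j)
    exact lt_of_lt_of_le h1 (hmax j (mem_univ j))
  have hub : ∀ j, ‖x j‖ ≤ M * y j := fun j =>
    (div_le_iff₀ (hy j)).mp (hmax j (mem_univ j))
  have hxi : ‖x i‖ = M * y i := (div_mul_cancel₀ _ (hy i).ne').symm
  have key := abs_eig_le_row hcard heig i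
  have h2 : (hDeg n E i : ℝ) * ‖x i‖ ^ (k-1)
      + ∑ e ∈ E.filter (fun e => i ∈ e), ∏ j ∈ e.erase i, ‖x j‖
      ≤ M ^ (k-1) * (R * y i ^ (k-1)) := by
    have hsum : ∀ e ∈ E.filter (fun e => i ∈ e),
        ∏ j ∈ e.erase i, ‖x j‖ ≤ M ^ (k-1) * ∏ j ∈ e.erase i, y j := by
      intro e he
      obtain ⟨heE, hie⟩ := Finset.mem_filter.mp he
      have hcardE : (e.erase i).card = k - 1 := by
        rw [Finset.card_erase_of_mem hie, hcard e heE]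
      calc ∏ j ∈ e.erase i, ‖x j‖ ≤ ∏ j ∈ e.erase i, (M * y j) :=
            Finset.prod_le_prod (fun j _ => norm_nonneg _) (fun j _ => hub j)
        _ = M ^ (k-1) * ∏ j ∈ e.erase i, y j := by
            rw [Finset.prod_mul_distrib, Finset.prod_const, hcardE]
    calc (hDeg n E i : ℝ) * ‖x i‖ ^ (k-1)
        + ∑ e ∈ E.filter (fun e => i ∈ e), ∏ j ∈ e.erase i, ‖x j‖
        ≤ (hDeg n E i : ℝ) * (M * y i) ^ (k-1)
          + ∑ e ∈ E.filter (fun e => i ∈ e), M ^ (k-1) * ∏ j ∈ e.erase i, y j := by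
          refine add_le_add (le_of_eq ?_) (Finset.sum_le_sum hsum)
          rw [hxi]
      _ = M ^ (k-1) * ((hDeg n E i : ℝ) * y i ^ (k-1)
          + ∑ e ∈ E.filter (fun e => i ∈ e), ∏ j ∈ e.erase i, y j) := by
          rw [mul_pow, mul_add, ← Finset.mul_sum]; ring
      _ ≤ M ^ (k-1) * (R * y i ^ (k-1)) :=
          mul_le_mul_of_nonneg_left (hR i) (pow_nonneg hMpos.le _)
  have hfinal : ‖ρ‖ * (M * y i) ^ (k-1) ≤ M ^ (k-1) * (R * y i ^ (k-1)) := by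
    calc ‖ρ‖ * (M * y i) ^ (k-1)
        = ‖ρ‖ * ‖x i‖ ^ (k-1) := by rw [hxi]
      _ ≤ _ := le_trans key h2
  have hpos : 0 < M ^ (k-1) * y i ^ (k-1) :=
    mul_pos (pow_pos hMpos _) (pow_pos (hy i) _)
  have : ‖ρ‖ * (M ^ (k-1) * y i ^ (k-1)) ≤ R * (M ^ (k-1) * y i ^ (k-1)) := by
    calc ‖ρ‖ * (M ^ (k-1) * y i ^ (k-1))
        = ‖ρ‖ * (M * y i) ^ (k-1) := by rw [mul_pow]
      _ ≤ M ^ (k-1) * (R * y i ^ (k-1)) := hfinal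
      _ = R * (M ^ (k-1) * y i ^ (k-1)) := by ring
  exact le_of_mul_le_mul_right this hpos

lemma rigidity (hn : 0 < n) {E : Finset (Finset (Fin n))} (hcard : ∀ e ∈ E, e.card = k)
    (hconn : HConn n E)
    (y : Fin n → ℝ) (hy : ∀ j, 0 < y j) (R : ℝ)
    (hR : ∀ i, (hDeg n E i : ℝ) * y i ^ (k-1)
        + ∑ e ∈ E.filter (fun e => i ∈ e), ∏ j ∈ e.erase i, y j ≤ R * y i ^ (k-1))
    {ρ : ℂ} {x : Fin n → ℂ} (hx : x ≠ 0)
    (heig : ∀ i, (∑ f : Fin (k-1) → Fin n, (qT n k E i f : ℂ) * ∏ a, x (f a))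
      = ρ * x i ^ (k-1))
    (habs : ‖ρ‖ = R) :
    ∀ i, (hDeg n E i : ℝ) * y i ^ (k-1)
        + ∑ e ∈ E.filter (fun e => i ∈ e), ∏ j ∈ e.erase i, y j = R * y i ^ (k-1) := by
  classical
  haveI : Nonempty (Fin n) := ⟨⟨0, hn⟩⟩
  obtain ⟨i₀, -, hmax⟩ := Finset.exists_max_image Finset.univ
    (fun j => ‖x j‖ / y j) Finset.univ_nonempty
  set M : ℝ := ‖x i₀‖ / y i₀ with hMdef
  have hMpos : 0 < M := by
    obtain ⟨j, hj⟩ := Function.ne_iff.mp hx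
    have h1 : 0 < ‖x j‖ / y j := div_pos (norm_pos_iff.mpr hj) (hy j)
    exact lt_of_lt_of_le h1 (hmax j (mem_univ j))
  have hub : ∀ j, ‖x j‖ ≤ M * y j := fun j =>
    (div_le_iff₀ (hy j)).mp (hmax j (mem_univ j))
  have hxi₀ : ‖x i₀‖ = M * y i₀ := (div_mul_cancel₀ _ (hy i₀).ne').symm
  have claim : ∀ i, ‖x i‖ = M * y i →
      ((hDeg n E i : ℝ) * y i ^ (k-1)
        + ∑ e ∈ E.filter (fun e => i ∈ e), ∏ j ∈ e.erase i, y j = R * y i ^ (k-1))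
      ∧ ∀ e ∈ E, i ∈ e → ∀ j ∈ e, ‖x j‖ = M * y j := by
    intro i hxi
    have key := abs_eig_le_row hcard heig i
    set A : ℝ := (hDeg n E i : ℝ) * ‖x i‖ ^ (k-1)
        + ∑ e ∈ E.filter (fun e => i ∈ e), ∏ j ∈ e.erase i, ‖x j‖ with hA
    set Bval : ℝ := (hDeg n E i : ℝ) * (M * y i) ^ (k-1)
        + ∑ e ∈ E.filter (fun e => i ∈ e), ∏ j ∈ e.erase i, (M * y j) with hB
    have hsum_le : ∀ e ∈ E.filter (fun e => i ∈ e),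
        ∏ j ∈ e.erase i, ‖x j‖ ≤ ∏ j ∈ e.erase i, (M * y j) := by
      intro e he
      exact Finset.prod_le_prod (fun j _ => norm_nonneg _) (fun j _ => hub j)
    have hAle : A ≤ Bval := by
      rw [hA, hB, hxi]
      exact add_le_add le_rfl (Finset.sum_le_sum hsum_le)
    have hBrow : Bval = M ^ (k-1) * ((hDeg n E i : ℝ) * y i ^ (k-1)
        + ∑ e ∈ E.filter (fun e => i ∈ e), ∏ j ∈ e.erase i, y j) := by
      rw [hB, mul_add, Finset.mul_sum]
      congr 1
      · rw [mul_pow]; ring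
      · refine Finset.sum_congr rfl fun e he => ?_
        obtain ⟨heE, hie⟩ := Finset.mem_filter.mp he
        rw [Finset.prod_mul_distrib, Finset.prod_const,
          Finset.card_erase_of_mem hie, hcard e heE]
    have hBtop : Bval ≤ M ^ (k-1) * (R * y i ^ (k-1)) := by
      rw [hBrow]
      exact mul_le_mul_of_nonneg_left (hR i) (pow_nonneg hMpos.le _)
    have hbot : R * (M * y i) ^ (k-1) ≤ A := by
      rw [← habs, ← hxi]; exact key
    have htop_eq : R * (M * y i) ^ (k-1) = M ^ (k-1) * (R * y i ^ (k-1)) := by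
      rw [mul_pow]; ring
    have hAB : A = Bval := le_antisymm hAle (by linarith)
    have hBeq : Bval = M ^ (k-1) * (R * y i ^ (k-1)) := le_antisymm hBtop (by linarith)
    constructor
    · have := hBrow ▸ hBeq
      exact mul_left_cancel₀ (pow_ne_zero _ hMpos.ne') this
    · have hSeq : ∑ e ∈ E.filter (fun e => i ∈ e), ∏ j ∈ e.erase i, ‖x j‖
          = ∑ e ∈ E.filter (fun e => i ∈ e), ∏ j ∈ e.erase i, (M * y j) := by
        have := hAB
        rw [hA, hB, hxi] at this
        linarith
      have hterm := (Finset.sum_eq_sum_iff_of_le hsum_le).mp hSeq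
      intro e heE hie j hj
      by_cases hji : j = i
      · rw [hji]; exact hxi
      · have hj' : j ∈ e.erase i := Finset.mem_erase.mpr ⟨hji, hj⟩
        have hefil : e ∈ E.filter (fun e => i ∈ e) := Finset.mem_filter.mpr ⟨heE, hie⟩
        exact prod_factors_eq (fun j _ => hub j)
          (fun j _ => mul_pos hMpos (hy j)) (fun j _ => norm_nonneg _)
          (hterm e hefil) j hj'
  have hall : ∀ v, ‖x v‖ = M * y v := by
    intro v
    by_cases hv : v = i₀
    · rw [hv]; exact hxi₀
    · obtain ⟨r, es, hes, hu, hv', hint⟩ := hconn i₀ v (fun h => hv h.symm)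
      have hstep : ∀ s : ℕ, ∀ hs : s < r + 1, ∀ j ∈ es ⟨s, hs⟩,
          ‖x j‖ = M * y j := by
        intro s
        induction s with
        | zero =>
          intro hs j hj
          have h0 : (⟨0, hs⟩ : Fin (r+1)) = 0 := by ext; simp
          rw [h0] at hj
          exact (claim i₀ hxi₀).2 (es 0) (hes 0) hu j hj
        | succ s ih =>
          intro hs j hj
          have hsr : s < r := by omega
          obtain ⟨u, hu'⟩ := hint ⟨s, hsr⟩
          rw [Finset.mem_inter] at hu'
          have hc : (Fin.castSucc ⟨s, hsr⟩ : Fin (r+1)) = ⟨s, by omega⟩ := by ext; simp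
          have hs2 : (Fin.succ ⟨s, hsr⟩ : Fin (r+1)) = ⟨s+1, hs⟩ := by ext; simp
          rw [hc] at hu'
          rw [hs2] at hu'
          have hxu := ih (by omega) u hu'.1
          exact (claim u hxu).2 (es ⟨s+1, hs⟩) (hes _) hu'.2 j hj
      have hlast : (Fin.last r : Fin (r+1)) = ⟨r, by omega⟩ := rfl
      rw [hlast] at hv'
      exact hstep r (by omega) v hv'
  exact fun i => (claim i (hall i)).1

lemma spec_attained (hn : 0 < n) (T : Fin n → (Fin (k-1) → Fin n) → ℝ)
    (hS : {r : ℝ | ∃ ρ : ℂ, ‖ρ‖ = r ∧ ∃ x : Fin n → ℂ, x ≠ 0 ∧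
      ∀ i, (∑ f : Fin (k-1) → Fin n, (T i f : ℂ) * ∏ a, x (f a))
        = ρ * x i ^ (k-1)}.Nonempty) :
    sSup {r : ℝ | ∃ ρ : ℂ, ‖ρ‖ = r ∧ ∃ x : Fin n → ℂ, x ≠ 0 ∧
      ∀ i, (∑ f : Fin (k-1) → Fin n, (T i f : ℂ) * ∏ a, x (f a)) = ρ * x i ^ (k-1)}
    ∈ {r : ℝ | ∃ ρ : ℂ, ‖ρ‖ = r ∧ ∃ x : Fin n → ℂ, x ≠ 0 ∧
      ∀ i, (∑ f : Fin (k-1) → Fin n, (T i f : ℂ) * ∏ a, x (f a)) = ρ * x i ^ (k-1)} := by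
  classical
  haveI : Nonempty (Fin n) := ⟨⟨0, hn⟩⟩
  set S := {r : ℝ | ∃ ρ : ℂ, ‖ρ‖ = r ∧ ∃ x : Fin n → ℂ, x ≠ 0 ∧
      ∀ i, (∑ f : Fin (k-1) → Fin n, (T i f : ℂ) * ∏ a, x (f a)) = ρ * x i ^ (k-1)} with hSdef
  set K : Set (ℂ × (Fin n → ℂ)) :=
    {p | (∑ j, Complex.normSq (p.2 j)) = 1} ∩
      ⋂ i : Fin n, {p | (∑ f : Fin (k-1) → Fin n, (T i f : ℂ) * ∏ a, p.2 (f a))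
        = p.1 * p.2 i ^ (k-1)} with hKdef
  have hKclosed : IsClosed K := by
    refine IsClosed.inter ?_ (isClosed_iInter fun i => ?_)
    · exact isClosed_eq (continuous_finset_sum _ fun j _ =>
        Complex.continuous_normSq.comp ((continuous_apply j).comp continuous_snd))
        continuous_const
    · refine isClosed_eq ?_ ?_
      · refine continuous_finset_sum _ fun f _ => ?_
        exact continuous_const.mul (continuous_finset_prod _ fun a _ =>
          (continuous_apply (f a)).comp continuous_snd)
      · exact continuous_fst.mul (((continuous_apply i).comp continuous_snd).pow _)
  set C : ℝ := ∑ i, ∑ f : Fin (k-1) → Fin n, |T i f| with hC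
  have hKsub : K ⊆ Metric.closedBall (0:ℂ) C ×ˢ Metric.closedBall (0 : Fin n → ℂ) 1 := by
    rintro ⟨ρ, x⟩ ⟨hnorm, heqs⟩
    simp only [Set.mem_iInter, Set.mem_setOf_eq] at heqs
    have habs1 : ∀ j, ‖x j‖ ≤ 1 := by
      intro j
      have h1 : Complex.normSq (x j) ≤ 1 := by
        rw [← hnorm]
        exact Finset.single_le_sum (fun j _ => Complex.normSq_nonneg _) (mem_univ j)
      have h2 := Complex.sq_norm (x j)
      nlinarith [norm_nonneg (x j)]
    constructor
    · -- ‖ρ‖ ≤ C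
      obtain ⟨j, -, hmax⟩ := Finset.exists_max_image Finset.univ
        (fun j => ‖x j‖) Finset.univ_nonempty
      have hjpos : 0 < ‖x j‖ := by
        have hx0 : ∃ j, x j ≠ 0 := by
          by_contra h
          push_neg at h
          simp [h] at hnorm
        obtain ⟨j', hj'⟩ := hx0
        exact lt_of_lt_of_le (norm_pos_iff.mpr hj') (hmax j' (mem_univ j'))
      have hkey : ‖ρ‖ * ‖x j‖ ^ (k-1)
          ≤ (∑ f : Fin (k-1) → Fin n, |T j f|) * ‖x j‖ ^ (k-1) := by
        have h1 : ‖ρ‖ * ‖x j‖ ^ (k-1)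
            = ‖ρ * x j ^ (k-1)‖ := by rw [norm_mul, norm_pow]
        rw [h1, ← heqs j, Finset.sum_mul]
        calc ‖∑ f : Fin (k-1) → Fin n, (T j f : ℂ) * ∏ a, x (f a)‖
            ≤ ∑ f : Fin (k-1) → Fin n, ‖(T j f : ℂ) * ∏ a, x (f a)‖ :=
              norm_sum_le _ _
          _ ≤ ∑ f : Fin (k-1) → Fin n, |T j f| * ‖x j‖ ^ (k-1) := by
              refine Finset.sum_le_sum fun f _ => ?_
              rw [norm_mul, norm_prod, Complex.norm_real, Real.norm_eq_abs]
              refine mul_le_mul_of_nonneg_left ?_ (abs_nonneg _)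
              calc ∏ a, ‖x (f a)‖ ≤ ∏ _a : Fin (k-1), ‖x j‖ :=
                    Finset.prod_le_prod (fun a _ => norm_nonneg _)
                      (fun a _ => hmax (f a) (mem_univ _))
                _ = ‖x j‖ ^ (k-1) := by
                    rw [Finset.prod_const, Finset.card_univ, Fintype.card_fin]
      have h2 : ‖ρ‖ ≤ ∑ f : Fin (k-1) → Fin n, |T j f| :=
        le_of_mul_le_mul_right hkey (pow_pos hjpos _)
      have h3 : (∑ f : Fin (k-1) → Fin n, |T j f|) ≤ C :=
        Finset.single_le_sum (f := fun i => ∑ f : Fin (k-1) → Fin n, |T i f|)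
          (fun i _ => Finset.sum_nonneg fun f _ => abs_nonneg _) (mem_univ j)
      simpa using le_trans h2 h3
    · -- ‖x‖ ≤ 1
      simp only [Metric.mem_closedBall, dist_zero_right]
      rw [pi_norm_le_iff_of_nonneg zero_le_one]
      intro j
      simpa using habs1 j
  have hKcompact : IsCompact K :=
    IsCompact.of_isClosed_subset
      ((isCompact_closedBall _ _).prod (isCompact_closedBall _ _)) hKclosed hKsub
  have hSet : S = (fun p : ℂ × (Fin n → ℂ) => ‖p.1‖) '' K := by
    ext r
    constructor
    · rintro ⟨ρ, rfl, x, hx0, heq⟩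
      have hpos : 0 < ∑ j, Complex.normSq (x j) := by
        obtain ⟨j, hj⟩ := Function.ne_iff.mp hx0
        refine Finset.sum_pos' (fun j _ => Complex.normSq_nonneg _) ⟨j, mem_univ j, ?_⟩
        exact Complex.normSq_pos.mpr hj
      set c : ℝ := Real.sqrt (∑ j, Complex.normSq (x j)) with hc
      have hcpos : 0 < c := Real.sqrt_pos.mpr hpos
      refine ⟨(ρ, fun j => (↑(c⁻¹) : ℂ) * x j), ⟨?_, ?_⟩, rfl⟩
      · simp only [Set.mem_setOf_eq]
        have : ∀ j, Complex.normSq ((↑(c⁻¹) : ℂ) * x j)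
            = c⁻¹ * c⁻¹ * Complex.normSq (x j) := by
          intro j; rw [Complex.normSq_mul, Complex.normSq_ofReal]
        rw [Finset.sum_congr rfl (fun j _ => this j), ← Finset.mul_sum]
        have hsq : c ^ 2 = ∑ j, Complex.normSq (x j) := Real.sq_sqrt hpos.le
        rw [← hsq, pow_two]
        field_simp
      · simp only [Set.mem_iInter, Set.mem_setOf_eq]
        intro i
        have hprod : ∀ f : Fin (k-1) → Fin n,
            ∏ a, ((↑(c⁻¹) : ℂ) * x (f a)) = (↑(c⁻¹) : ℂ) ^ (k-1) * ∏ a, x (f a) := by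
          intro f
          rw [Finset.prod_mul_distrib, Finset.prod_const, Finset.card_univ, Fintype.card_fin]
        calc ∑ f : Fin (k-1) → Fin n, (T i f : ℂ) * ∏ a, ((↑(c⁻¹) : ℂ) * x (f a))
            = (↑(c⁻¹) : ℂ) ^ (k-1) * ∑ f : Fin (k-1) → Fin n, (T i f : ℂ) * ∏ a, x (f a) := by
              rw [Finset.mul_sum]
              exact Finset.sum_congr rfl fun f _ => by rw [hprod f]; ring
          _ = (↑(c⁻¹) : ℂ) ^ (k-1) * (ρ * x i ^ (k-1)) := by rw [heq i]
          _ = ρ * ((↑(c⁻¹) : ℂ) * x i) ^ (k-1) := by rw [mul_pow]; ring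
    · rintro ⟨⟨ρ, x⟩, ⟨hnorm, heqs⟩, rfl⟩
      simp only [Set.mem_iInter, Set.mem_setOf_eq] at heqs hnorm
      refine ⟨ρ, rfl, x, ?_, heqs⟩
      intro h
      rw [h] at hnorm
      simp at hnorm
  rw [hSet] at hS ⊢
  exact (hKcompact.image (continuous_norm.comp continuous_fst)).sSup_mem hS

/-- a positive real vector satisfying the row equalities exactly gives membership of R -/
lemma mem_spec (hn : 0 < n) {E : Finset (Finset (Fin n))} (hcard : ∀ e ∈ E, e.card = k)
    (y : Fin n → ℝ) (hy : ∀ j, 0 < y j) (R : ℝ) (hR0 : 0 ≤ R)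
    (h : ∀ i, (hDeg n E i : ℝ) * y i ^ (k-1)
        + ∑ e ∈ E.filter (fun e => i ∈ e), ∏ j ∈ e.erase i, y j = R * y i ^ (k-1)) :
    R ∈ {r : ℝ | ∃ ρ : ℂ, ‖ρ‖ = r ∧ ∃ x : Fin n → ℂ, x ≠ 0 ∧
      ∀ i, (∑ f : Fin (k-1) → Fin n, (qT n k E i f : ℂ) * ∏ a, x (f a))
        = ρ * x i ^ (k-1)} := by
  refine ⟨(R : ℂ), by simp [abs_of_nonneg hR0],
    fun j => ((y j : ℝ) : ℂ), ?_, ?_⟩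
  · intro hzero
    have := congrFun hzero ⟨0, hn⟩
    simp only [Pi.zero_apply, Complex.ofReal_eq_zero] at this
    exact (hy _).ne' this
  · intro i
    have hcast : ∑ f : Fin (k-1) → Fin n, (qT n k E i f : ℂ) * ∏ a, ((y (f a) : ℝ) : ℂ)
        = (((∑ f : Fin (k-1) → Fin n, qT n k E i f * ∏ a, y (f a)) : ℝ) : ℂ) := by
      push_cast
      rfl
    rw [hcast, q_row hcard, h i]
    push_cast
    ring

theorem main_aux (n k : ℕ) (hk : 2 ≤ k) (hkn : k ≤ n) (h0 : 0 < n) (h1 : 1 < n)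
    (E : Finset (Finset (Fin n))) (hcard : ∀ e ∈ E, e.card = k)
    (hconn : HConn n E)
    (hsort : ∀ i j : Fin n, i ≤ j → hDeg n E j ≤ hDeg n E i)
    (dstar : ℝ) (v0 v1 : Fin n) (hv0 : v0 = ⟨0, h0⟩) (hv1 : v1 = ⟨1, h1⟩)
    (hstar1 : hDeg n E v0 = hDeg n E v1 → dstar = 1)
    (hstar2 : hDeg n E v1 < hDeg n E v0 →
      ((hDeg n E v1 : ℝ) * dstar ^ k +
          ((hDeg n E v1 : ℝ) - (hDeg n E v0 : ℝ)) * dstar ^ (k-1)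
          - (hDeg n E v0 : ℝ) = 0) ∧
        ((hDeg n E v0 : ℝ) / (hDeg n E v1 : ℝ)) ^ ((1 : ℝ)/k) < dstar ∧
        dstar < (hDeg n E v0 : ℝ) / (hDeg n E v1 : ℝ)) :
    specRad n k (qT n k E) =
        (hDeg n E v0 : ℝ) + (hDeg n E v0 : ℝ) * (1/dstar) ^ (k-1)
      ↔ ((∀ i j : Fin n, hDeg n E i = hDeg n E j) ∨
          ∃ w : Fin n, (∀ e ∈ E, w ∈ e) ∧ ∃ r : ℕ, ∀ i : Fin n, i ≠ w → hDeg n E i = r) := by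
  classical
  have hn : 0 < n := h0
  have hne01 : v0 ≠ v1 := by
    rw [hv0, hv1]
    intro h
    have h2 : (0:ℕ) = 1 := congrArg Fin.val h
    omega
  have hmax : ∀ i, hDeg n E i ≤ hDeg n E v0 := by
    intro i
    exact hsort v0 i (by rw [hv0]; exact Fin.mk_le_of_le_val (Nat.zero_le _))
  have hsecond : ∀ i, i ≠ v0 → hDeg n E i ≤ hDeg n E v1 := by
    intro i hi
    refine hsort v1 i ?_
    have hne : (i : ℕ) ≠ 0 := by
      intro h
      exact hi (by rw [hv0]; exact Fin.ext h)
    rw [hv1, Fin.le_def]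
    show 1 ≤ (i : ℕ)
    omega
  have hdpos : ∀ i, 0 < hDeg n E i := by
    intro i
    have hex : ∃ j : Fin n, i ≠ j := by
      by_cases h : i = v0
      · exact ⟨v1, h ▸ hne01⟩
      · exact ⟨v0, h⟩
    obtain ⟨j, hj⟩ := hex
    obtain ⟨r, es, hes, hu, -, -⟩ := hconn i j hj
    exact Finset.card_pos.mpr ⟨es 0, Finset.mem_filter.mpr ⟨hes 0, hu⟩⟩
  have hd0R : (0:ℝ) < (hDeg n E v0 : ℝ) := by exact_mod_cast hdpos v0
  have hd1R : (0:ℝ) < (hDeg n E v1 : ℝ) := by exact_mod_cast hdpos v1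
  rcases lt_or_eq_of_le (hmax v1) with hlt | heqd
  · -- CASE d₁ > d₂
    obtain ⟨heq0, hgt, -⟩ := hstar2 hlt
    have hratio : (1:ℝ) < (hDeg n E v0 : ℝ) / (hDeg n E v1 : ℝ) :=
      (one_lt_div hd1R).mpr (by exact_mod_cast hlt)
    have hds1 : 1 < dstar :=
      lt_of_le_of_lt (Real.one_le_rpow hratio.le (by positivity)) hgt
    have hdsp : (0:ℝ) < dstar := lt_trans one_pos hds1
    have hXp : (0:ℝ) < dstar ^ (k-1) := pow_pos hdsp _
    set P : ℝ := (hDeg n E v0 : ℝ) + (hDeg n E v0 : ℝ) * (1/dstar) ^ (k-1) with hPdef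
    have hP0 : 0 < P := by positivity
    have hpowk : dstar ^ k = dstar * dstar ^ (k-1) := by
      rw [← pow_succ']
      congr 1
      omega
    have h2 : (hDeg n E v1 : ℝ) * (1 + dstar) * dstar^(k-1)
        = (hDeg n E v0 : ℝ) * dstar^(k-1) + (hDeg n E v0 : ℝ) := by
      rw [hpowk] at heq0
      linear_combination heq0
    have hPX : P * dstar^(k-1)
        = (hDeg n E v0 : ℝ) * dstar^(k-1) + (hDeg n E v0 : ℝ) := by
      rw [hPdef, one_div, inv_pow, add_mul, mul_assoc, inv_mul_cancel₀ hXp.ne', mul_one]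
    have hkey : (hDeg n E v1 : ℝ) * (1 + dstar) = P :=
      mul_right_cancel₀ hXp.ne' (h2.trans hPX.symm)
    set y : Fin n → ℝ := fun i => if i = v0 then dstar else 1 with hy
    have hyp : ∀ j, 0 < y j := by
      intro j
      rw [hy]
      dsimp only
      split
      · exact hdsp
      · exact one_pos
    have hrow0 : (hDeg n E v0 : ℝ) * y v0 ^ (k-1)
        + ∑ e ∈ E.filter (fun e => v0 ∈ e), ∏ j ∈ e.erase v0, y j
        = P * y v0 ^ (k-1) := by
      have hyv0 : y v0 = dstar := if_pos rfl
      have hprod : ∀ e ∈ E.filter (fun e => v0 ∈ e), ∏ j ∈ e.erase v0, y j = 1 := by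
        intro e he
        refine Finset.prod_eq_one fun j hj => ?_
        rw [hy]
        exact if_neg (Finset.ne_of_mem_erase hj)
      rw [Finset.sum_congr rfl hprod, Finset.sum_const, hyv0]
      have : ((E.filter (fun e => v0 ∈ e)).card : ℝ) = (hDeg n E v0 : ℝ) := by
        rw [hDeg]
      rw [nsmul_eq_mul, mul_one, this, hPX]
    have hcompute : ∀ i, i ≠ v0 →
        (hDeg n E i : ℝ) * y i ^ (k-1)
          + ∑ e ∈ E.filter (fun e => i ∈ e), ∏ j ∈ e.erase i, y j
        = 2 * (hDeg n E i : ℝ)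
          + (((E.filter (fun e => i ∈ e)).filter (fun e => v0 ∈ e)).card : ℝ)
            * (dstar - 1) := by
      intro i hi
      have hyi : y i = 1 := if_neg hi
      have hsplit : ∀ e ∈ E.filter (fun e => i ∈ e),
          ∏ j ∈ e.erase i, y j = if v0 ∈ e then dstar else 1 := by
        intro e he
        rw [hy]
        rw [Finset.prod_ite_eq' (e.erase i) v0 (fun _ => dstar)]
        refine if_congr ?_ rfl rfl
        constructor
        · exact fun h => Finset.mem_of_mem_erase h
        · exact fun h => Finset.mem_erase.mpr ⟨Ne.symm hi, h⟩
      rw [Finset.sum_congr rfl hsplit, Finset.sum_ite]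
      rw [Finset.sum_const, Finset.sum_const]
      have hcards := Finset.card_filter_add_card_filter_not
        (s := E.filter (fun e => i ∈ e)) (fun e => v0 ∈ e)
      have hdi : (E.filter (fun e => i ∈ e)).card = hDeg n E i := rfl
      rw [hdi] at hcards
      have hle : ((E.filter (fun e => i ∈ e)).filter (fun e => v0 ∈ e)).card
          ≤ hDeg n E i := by
        rw [← hdi]; exact Finset.card_filter_le _ _
      rw [hyi, one_pow, mul_one, nsmul_eq_mul, nsmul_eq_mul, mul_one]
      have hcardneg : (((E.filter (fun e => i ∈ e)).filter (fun e => ¬ v0 ∈ e)).card : ℝ)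
          = (hDeg n E i : ℝ)
            - (((E.filter (fun e => i ∈ e)).filter (fun e => v0 ∈ e)).card : ℝ) := by
        have : ((E.filter (fun e => i ∈ e)).filter (fun e => ¬ v0 ∈ e)).card
            = hDeg n E i
              - ((E.filter (fun e => i ∈ e)).filter (fun e => v0 ∈ e)).card := by omega
        rw [this, Nat.cast_sub (by omega)]
      rw [hcardneg]
      ring
    have hrowle : ∀ i, (hDeg n E i : ℝ) * y i ^ (k-1)
        + ∑ e ∈ E.filter (fun e => i ∈ e), ∏ j ∈ e.erase i, y j ≤ P * y i ^ (k-1) := by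
      intro i
      by_cases hi : i = v0
      · rw [hi]; exact le_of_eq hrow0
      · have hyi : y i = 1 := if_neg hi
        rw [hcompute i hi, hyi, one_pow, mul_one, ← hkey]
        have hdle : (hDeg n E i : ℝ) ≤ (hDeg n E v1 : ℝ) := by
          exact_mod_cast hsecond i hi
        have hcle : (((E.filter (fun e => i ∈ e)).filter (fun e => v0 ∈ e)).card : ℝ)
            ≤ (hDeg n E i : ℝ) := by
          exact_mod_cast Finset.card_filter_le _ _
        nlinarith [mul_nonneg (sub_nonneg.mpr hcle) (sub_nonneg.mpr hds1.le),
          mul_nonneg (sub_nonneg.mpr hdle) (by linarith : (0:ℝ) ≤ dstar)]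
    rw [specRad]
    constructor
    · -- hard direction
      intro hmu
      right
      have hSne : {r : ℝ | ∃ ρ : ℂ, ‖ρ‖ = r ∧ ∃ x : Fin n → ℂ, x ≠ 0 ∧
          ∀ i, (∑ f : Fin (k-1) → Fin n, (qT n k E i f : ℂ) * ∏ a, x (f a))
            = ρ * x i ^ (k-1)}.Nonempty := by
        by_contra h
        rw [Set.not_nonempty_iff_eq_empty] at h
        rw [h, Real.sSup_empty] at hmu
        linarith
      have hmem := spec_attained hn (qT n k E) hSne
      rw [hmu] at hmem
      obtain ⟨ρ, habs, x, hx0, heig⟩ := hmem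
      have hrig := rigidity hn hcard hconn y hyp P hrowle hx0 heig habs
      have hstruct : ∀ i, i ≠ v0 → hDeg n E i = hDeg n E v1 ∧
          ((E.filter (fun e => i ∈ e)).filter (fun e => v0 ∈ e))
            = E.filter (fun e => i ∈ e) := by
        intro i hi
        have h3 := hrig i
        have hyi : y i = 1 := if_neg hi
        rw [hcompute i hi, hyi, one_pow, mul_one, ← hkey] at h3
        have hdle : (hDeg n E i : ℝ) ≤ (hDeg n E v1 : ℝ) := by
          exact_mod_cast hsecond i hi
        have hcle : (((E.filter (fun e => i ∈ e)).filter (fun e => v0 ∈ e)).card : ℝ)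
            ≤ (hDeg n E i : ℝ) := by
          exact_mod_cast Finset.card_filter_le _ _
        have hzero : ((hDeg n E v1 : ℝ) - (hDeg n E i : ℝ)) * (1 + dstar)
            + ((hDeg n E i : ℝ)
              - (((E.filter (fun e => i ∈ e)).filter (fun e => v0 ∈ e)).card : ℝ))
              * (dstar - 1) = 0 := by linarith
        have ht1 : 0 ≤ ((hDeg n E v1 : ℝ) - (hDeg n E i : ℝ)) * (1 + dstar) :=
          mul_nonneg (by linarith) (by linarith)
        have ht2 : 0 ≤ ((hDeg n E i : ℝ)
            - (((E.filter (fun e => i ∈ e)).filter (fun e => v0 ∈ e)).card : ℝ))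
            * (dstar - 1) := mul_nonneg (by linarith) (by linarith)
        have he1 : ((hDeg n E v1 : ℝ) - (hDeg n E i : ℝ)) * (1 + dstar) = 0 := by linarith
        have he2 : ((hDeg n E i : ℝ)
            - (((E.filter (fun e => i ∈ e)).filter (fun e => v0 ∈ e)).card : ℝ))
            * (dstar - 1) = 0 := by linarith
        have hd : hDeg n E i = hDeg n E v1 := by
          rcases mul_eq_zero.mp he1 with h' | h'
          · have : (hDeg n E v1 : ℝ) = (hDeg n E i : ℝ) := by linarith
            exact_mod_cast this.symm
          · linarith
        have hc : ((E.filter (fun e => i ∈ e)).filter (fun e => v0 ∈ e)).card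
            = hDeg n E i := by
          rcases mul_eq_zero.mp he2 with h' | h'
          · have : (hDeg n E i : ℝ)
                = (((E.filter (fun e => i ∈ e)).filter (fun e => v0 ∈ e)).card : ℝ) := by
              linarith
            exact_mod_cast this.symm
          · linarith
        refine ⟨hd, Finset.eq_of_subset_of_card_le (Finset.filter_subset _ _) ?_⟩
        rw [hc]
        exact le_rfl
      refine ⟨v0, ?_, hDeg n E v1, fun i hi => (hstruct i hi).1⟩
      intro e heE
      have hex : ∃ j ∈ e, j ≠ v0 := by
        have hcd : e.card = k := hcard e heE
        by_cases hv : v0 ∈ e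
        · have : 0 < (e.erase v0).card := by
            rw [Finset.card_erase_of_mem hv, hcd]; omega
          obtain ⟨j, hj⟩ := Finset.card_pos.mp this
          exact ⟨j, Finset.mem_of_mem_erase hj, Finset.ne_of_mem_erase hj⟩
        · have : 0 < e.card := by omega
          obtain ⟨j, hj⟩ := Finset.card_pos.mp this
          exact ⟨j, hj, fun h => hv (h ▸ hj)⟩
      obtain ⟨j, hje, hjv0⟩ := hex
      have he2 : e ∈ E.filter (fun e => j ∈ e) := Finset.mem_filter.mpr ⟨heE, hje⟩
      rw [← (hstruct j hjv0).2] at he2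
      exact (Finset.mem_filter.mp he2).2
    · -- easy direction
      intro hRHS
      rcases hRHS with hreg | ⟨w, hw, r, hr⟩
      · exact absurd (hreg v0 v1) (by omega)
      · have hdw : hDeg n E w = E.card := by
          rw [hDeg, Finset.filter_true_of_mem hw]
        have hwv0 : w = v0 := by
          by_contra hne
          have h3 : hDeg n E w ≤ hDeg n E v1 := hsecond w hne
          have h4 : hDeg n E v0 ≤ E.card := Finset.card_filter_le _ _
          omega
        subst hwv0
        have hrv1 : r = hDeg n E v1 := (hr v1 (Ne.symm hne01)).symm
        have hrowEq : ∀ i, (hDeg n E i : ℝ) * y i ^ (k-1)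
            + ∑ e ∈ E.filter (fun e => i ∈ e), ∏ j ∈ e.erase i, y j
            = P * y i ^ (k-1) := by
          intro i
          by_cases hi : i = w
          · rw [hi]; exact hrow0
          · have hyi : y i = 1 := if_neg hi
            rw [hcompute i hi, hyi, one_pow, mul_one, ← hkey]
            have hdi : hDeg n E i = hDeg n E v1 := hrv1 ▸ hr i hi
            have hfull : (E.filter (fun e => i ∈ e)).filter (fun e => w ∈ e)
                = E.filter (fun e => i ∈ e) :=
              Finset.filter_true_of_mem fun e he => hw e (Finset.mem_filter.mp he).1
            rw [hfull]
            have : ((E.filter (fun e => i ∈ e)).card : ℝ) = (hDeg n E i : ℝ) := rfl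
            rw [this, hdi]
            ring
        have hmem := mem_spec hn hcard y hyp P hP0.le hrowEq
        have hub : ∀ s ∈ {r : ℝ | ∃ ρ : ℂ, ‖ρ‖ = r ∧ ∃ x : Fin n → ℂ, x ≠ 0 ∧
            ∀ i, (∑ f : Fin (k-1) → Fin n, (qT n k E i f : ℂ) * ∏ a, x (f a))
              = ρ * x i ^ (k-1)}, s ≤ P := by
          rintro s ⟨ρ, rfl, x, hx0, heig⟩
          exact spec_bound hn hcard y hyp P hrowle hx0 heig
        exact le_antisymm (csSup_le ⟨P, hmem⟩ hub) (le_csSup ⟨P, hub⟩ hmem)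
  · -- CASE d₁ = d₂
    have hds : dstar = 1 := hstar1 heqd.symm
    rw [hds]
    rw [specRad]
    have hsimp : (hDeg n E v0 : ℝ) + (hDeg n E v0 : ℝ) * (1/(1:ℝ)) ^ (k-1)
        = 2 * (hDeg n E v0 : ℝ) := by norm_num; ring
    rw [hsimp]
    have hrow1 : ∀ i, (hDeg n E i : ℝ) * (fun _ : Fin n => (1:ℝ)) i ^ (k-1)
        + ∑ e ∈ E.filter (fun e => i ∈ e), ∏ j ∈ e.erase i, (fun _ : Fin n => (1:ℝ)) j
        = 2 * (hDeg n E i : ℝ) := by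
      intro i
      simp only [one_pow, mul_one, Finset.prod_const_one, Finset.sum_const, nsmul_eq_mul]
      have : ((E.filter (fun e => i ∈ e)).card : ℝ) = (hDeg n E i : ℝ) := rfl
      rw [this]
      ring
    have hrowle : ∀ i, (hDeg n E i : ℝ) * (fun _ : Fin n => (1:ℝ)) i ^ (k-1)
        + ∑ e ∈ E.filter (fun e => i ∈ e), ∏ j ∈ e.erase i, (fun _ : Fin n => (1:ℝ)) j
        ≤ (2 * (hDeg n E v0 : ℝ)) * (fun _ : Fin n => (1:ℝ)) i ^ (k-1) := by
      intro i
      rw [hrow1 i]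
      simp only [one_pow, mul_one]
      have : (hDeg n E i : ℝ) ≤ (hDeg n E v0 : ℝ) := by exact_mod_cast hmax i
      linarith
    constructor
    · intro hmu
      left
      have hSne : {r : ℝ | ∃ ρ : ℂ, ‖ρ‖ = r ∧ ∃ x : Fin n → ℂ, x ≠ 0 ∧
          ∀ i, (∑ f : Fin (k-1) → Fin n, (qT n k E i f : ℂ) * ∏ a, x (f a))
            = ρ * x i ^ (k-1)}.Nonempty := by
        by_contra h
        rw [Set.not_nonempty_iff_eq_empty] at h
        rw [h, Real.sSup_empty] at hmu
        linarith
      have hmem := spec_attained hn (qT n k E) hSne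
      rw [hmu] at hmem
      obtain ⟨ρ, habs, x, hx0, heig⟩ := hmem
      have hrig := rigidity hn hcard hconn (fun _ => (1:ℝ)) (fun _ => one_pos)
        (2 * (hDeg n E v0 : ℝ)) hrowle hx0 heig habs
      have hdeq : ∀ i, hDeg n E i = hDeg n E v0 := by
        intro i
        have h3 := hrig i
        rw [hrow1 i] at h3
        simp only [one_pow, mul_one] at h3
        have : (hDeg n E i : ℝ) = (hDeg n E v0 : ℝ) := by linarith
        exact_mod_cast this
      intro i j
      rw [hdeq i, hdeq j]
    · intro hRHS
      have hreg : ∀ i, hDeg n E i = hDeg n E v0 := by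
        rcases hRHS with hreg | ⟨w, hw, r, hr⟩
        · exact fun i => hreg i v0
        · intro i
          have hdw : hDeg n E w = E.card := by
            rw [hDeg, Finset.filter_true_of_mem hw]
          have hwmax : hDeg n E v0 ≤ hDeg n E w := by
            rw [hdw]; exact Finset.card_filter_le _ _
          have hwv0 : hDeg n E w = hDeg n E v0 := le_antisymm (hmax w) hwmax
          by_cases hiw : i = w
          · rw [hiw, hwv0]
          · have hir : hDeg n E i = r := hr i hiw
            -- some vertex ≠ w among v0, v1 has degree r
            by_cases hwv : w = v0
            · have : hDeg n E v1 = r := hr v1 (hwv ▸ Ne.symm hne01)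
              omega
            · have : hDeg n E v0 = r := hr v0 (fun h => hwv h.symm)
              omega
      have hrowEq : ∀ i, (hDeg n E i : ℝ) * (fun _ : Fin n => (1:ℝ)) i ^ (k-1)
          + ∑ e ∈ E.filter (fun e => i ∈ e), ∏ j ∈ e.erase i, (fun _ : Fin n => (1:ℝ)) j
          = (2 * (hDeg n E v0 : ℝ)) * (fun _ : Fin n => (1:ℝ)) i ^ (k-1) := by
        intro i
        rw [hrow1 i, hreg i]
        simp
      have hmem := mem_spec hn hcard (fun _ => (1:ℝ)) (fun _ => one_pos)
        (2 * (hDeg n E v0 : ℝ)) (by positivity) hrowEq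
      have hub : ∀ s ∈ {r : ℝ | ∃ ρ : ℂ, ‖ρ‖ = r ∧ ∃ x : Fin n → ℂ, x ≠ 0 ∧
          ∀ i, (∑ f : Fin (k-1) → Fin n, (qT n k E i f : ℂ) * ∏ a, x (f a))
            = ρ * x i ^ (k-1)}, s ≤ 2 * (hDeg n E v0 : ℝ) := by
        rintro s ⟨ρ, rfl, x, hx0, heig⟩
        exact spec_bound hn hcard (fun _ => (1:ℝ)) (fun _ => one_pos) _ hrowle hx0 heig
      exact le_antisymm (csSup_le ⟨_, hmem⟩ hub) (le_csSup ⟨_, hub⟩ hmem)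

end AuxStmt14

/-- Let `G` be a connected `k`-uniform hypergraph on `n` vertices with degree sequence
`d₁ ≥ … ≥ d_n` and `d*` as in the previous statement (`d* = 1` when `d₁ = d₂`, and a root of
`h(t) = d₂ t^k + (d₂−d₁)t^{k−1} − d₁` in `((d₁/d₂)^{1/k}, d₁/d₂)` when `d₁ > d₂`). Then
`μ(G) = d₁ + d₁(1/d*)^{k−1}` if and only if `G` is regular or `G` is the blow-up `H¹` of a
regular `(k−1)`-uniform hypergraph `H` on `n−1` vertices. -/

theorem stmt14 (n k : ℕ) (hk : 2 ≤ k) (hkn : k ≤ n)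
    (E : Finset (Finset (Fin n))) (hcard : ∀ e ∈ E, e.card = k)
    (hconn : HConn n E)
    (hsort : ∀ i j : Fin n, i ≤ j → hDeg n E j ≤ hDeg n E i)
    (dstar : ℝ)
    (hstar1 : hDeg n E ⟨0, by omega⟩ = hDeg n E ⟨1, by omega⟩ → dstar = 1)
    (hstar2 : hDeg n E ⟨1, by omega⟩ < hDeg n E ⟨0, by omega⟩ →
      ((hDeg n E ⟨1, by omega⟩ : ℝ) * dstar ^ k +
          ((hDeg n E ⟨1, by omega⟩ : ℝ) - (hDeg n E ⟨0, by omega⟩ : ℝ)) * dstar ^ (k-1) -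
          (hDeg n E ⟨0, by omega⟩ : ℝ) = 0) ∧
        ((hDeg n E ⟨0, by omega⟩ : ℝ) / (hDeg n E ⟨1, by omega⟩ : ℝ)) ^ ((1 : ℝ)/k) < dstar ∧
        dstar < (hDeg n E ⟨0, by omega⟩ : ℝ) / (hDeg n E ⟨1, by omega⟩ : ℝ)) :
    specRad n k (qT n k E) =
        (hDeg n E ⟨0, by omega⟩ : ℝ) + (hDeg n E ⟨0, by omega⟩ : ℝ) * (1/dstar) ^ (k-1)
      ↔ ((∀ i j : Fin n, hDeg n E i = hDeg n E j) ∨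
          ∃ w : Fin n, (∀ e ∈ E, w ∈ e) ∧ ∃ r : ℕ, ∀ i : Fin n, i ≠ w → hDeg n E i = r) := by
  exact main_aux n k hk hkn (by omega) (by omega) E hcard hconn hsort dstar
    ⟨0, by omega⟩ ⟨1, by omega⟩ rfl rfl hstar1 hstar2
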